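/- arXiv:1501.06092 — 2 statements merged into one kernel-verified Lean document; each statement's English description precedes it below -/
import Mathlib

section
/- Let A₀ generate a strongly continuous group (e^{A₀ t}) on a Banach space X and let B ∈ L(X). If the evolution system U(t,s) for A(t) = A₀ + e^{A₀ t} B e^{-A₀ t} on D(A₀) exists, then U(t,0) = e^{A₀ t} e^{B t}, and consequently e^{B t} maps D(A₀) into D(A₀) for all t. -/
open Set Filter Topology

/-- Let `A₀` generate a strongly continuous group `(G t) = (e^{A₀ t})` on a Banach space `X`,
with domain `D`, and let `B ∈ L(X)`.  If an evolution system `U t s` for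
`A t = A₀ + e^{A₀ t} B e^{-A₀ t}` on `D` exists, then `U t 0 = e^{A₀ t} e^{B t}`, and
consequently `e^{B t}` maps `D` into `D` for all `t ∈ [0,T]`. -/
theorem dyson_identity_for_conjugated_perturbation
    {X : Type*} [NormedAddCommGroup X] [NormedSpace ℝ X] [CompleteSpace X]
    (T : ℝ) (hT : 0 ≤ T)
    (G : ℝ → (X →L[ℝ] X))
    (hG0 : G 0 = 1)
    (hGadd : ∀ s t : ℝ, G (s + t) = (G s).comp (G t))
    (hGsc : ∀ x : X, Continuous fun t => G t x)
    (D : Set X)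
    (hD : D = {x : X | ∃ d : X, HasDerivAt (fun t => G t x) d 0})
    (A₀ : X → X)
    (hA₀ : ∀ x ∈ D, HasDerivAt (fun t => G t x) (A₀ x) 0)
    (B : X →L[ℝ] X)
    (U : ℝ → ℝ → (X →L[ℝ] X))
    (hid : ∀ s ∈ Icc 0 T, U s s = 1)
    (hcoc : ∀ s ∈ Icc 0 T, ∀ r ∈ Icc 0 T, ∀ t ∈ Icc 0 T,
      (U t r).comp (U r s) = U t s)
    (hsc : ∀ x : X, ContinuousOn (fun p : ℝ × ℝ => U p.1 p.2 x) (Icc 0 T ×ˢ Icc 0 T))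
    (hinv : ∀ s ∈ Icc 0 T, ∀ t ∈ Icc 0 T, ∀ y ∈ D, U t s y ∈ D)
    (hsol : ∀ s ∈ Icc 0 T, ∀ y ∈ D, ∀ t ∈ Icc 0 T,
      HasDerivWithinAt (fun τ => U τ s y)
        (A₀ (U t s y) + G t (B (G (-t) (U t s y)))) (Icc 0 T) t)
    (hC1 : ∀ s ∈ Icc 0 T, ∀ y ∈ D,
      ContinuousOn (fun t => A₀ (U t s y) + G t (B (G (-t) (U t s y)))) (Icc 0 T)) :
    (∀ t ∈ Icc 0 T, U t 0 = (G t).comp (NormedSpace.exp (t • B))) ∧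
    (∀ t ∈ Icc 0 T, ∀ y ∈ D, NormedSpace.exp (t • B) y ∈ D) := by
  have h0T : (0 : ℝ) ∈ Icc 0 T := ⟨le_refl 0, hT⟩
  -- uniform bound of ‖G s‖ on compact intervals
  have hbound : ∀ a b : ℝ, ∃ M : ℝ, ∀ s ∈ Icc a b, ‖G s‖ ≤ M := by
    intro a b
    obtain ⟨C, hC⟩ := banach_steinhaus (g := fun s : Icc a b => G (s : ℝ))
      (fun x => by
        obtain ⟨C, hC⟩ := (isCompact_Icc : IsCompact (Icc a b)).exists_bound_of_continuousOn
          ((hGsc x).continuousOn)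
        exact ⟨C, fun s => hC s s.2⟩)
    exact ⟨C, fun s hs => hC ⟨s, hs⟩⟩
  -- joint continuity of (s, x) ↦ G s x
  have hjc : Continuous (fun p : ℝ × X => G p.1 p.2) := by
    rw [continuous_iff_continuousAt]
    rintro ⟨s₀, x₀⟩
    obtain ⟨M, hM⟩ := hbound (s₀ - 1) (s₀ + 1)
    rw [ContinuousAt, tendsto_iff_norm_sub_tendsto_zero]
    have hb : Tendsto (fun p : ℝ × X => M * ‖p.2 - x₀‖ + ‖G p.1 x₀ - G s₀ x₀‖)
        (𝓝 (s₀, x₀)) (𝓝 0) := by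
      have hcont : Continuous (fun p : ℝ × X => M * ‖p.2 - x₀‖ + ‖G p.1 x₀ - G s₀ x₀‖) :=
        (continuous_const.mul ((continuous_snd.sub continuous_const).norm)).add
          ((((hGsc x₀).comp continuous_fst).sub continuous_const).norm)
      have := hcont.tendsto (s₀, x₀)
      simpa using this
    refine squeeze_zero' ?_ ?_ hb
    · exact Filter.Eventually.of_forall fun p => norm_nonneg _
    · have hnhd : ∀ᶠ p : ℝ × X in 𝓝 (s₀, x₀), p.1 ∈ Icc (s₀ - 1) (s₀ + 1) := by
        have : Icc (s₀ - 1) (s₀ + 1) ∈ 𝓝 s₀ := Icc_mem_nhds (by linarith) (by linarith)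
        exact continuousAt_fst.eventually_mem this
      filter_upwards [hnhd] with p hp
      have h1 : G p.1 p.2 - G s₀ x₀ = G p.1 (p.2 - x₀) + (G p.1 x₀ - G s₀ x₀) := by
        rw [map_sub]; abel
      rw [h1]
      refine (norm_add_le _ _).trans (add_le_add_left ?_ _)
      calc ‖G p.1 (p.2 - x₀)‖ ≤ ‖G p.1‖ * ‖p.2 - x₀‖ := (G p.1).le_opNorm _
        _ ≤ M * ‖p.2 - x₀‖ := by
            exact mul_le_mul_of_nonneg_right (hM p.1 hp) (norm_nonneg _)
  -- derivative of t ↦ G t z at an arbitrary point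
  have hGderiv : ∀ z ∈ D, ∀ s : ℝ, HasDerivAt (fun τ => G τ z) (G s (A₀ z)) s := by
    intro z hz s
    have h1 : HasDerivAt (fun τ : ℝ => G (τ - s) z) ((1 : ℝ) • A₀ z) s :=
      HasDerivAt.scomp_of_eq s (hA₀ z hz) ((hasDerivAt_id s).sub_const s) (by simp)
    have h2 : HasDerivAt (fun τ : ℝ => G s (G (τ - s) z)) (G s ((1 : ℝ) • A₀ z)) s :=
      (G s).hasFDerivAt.comp_hasDerivAt s h1
    have heq : (fun τ : ℝ => G s (G (τ - s) z)) = fun τ => G τ z := by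
      funext τ
      have h := hGadd s (τ - s)
      rw [show s + (τ - s) = τ by ring] at h
      rw [h]; rfl
    rw [heq, one_smul] at h2
    exact h2
  -- D is invariant under the group
  have hDinv : ∀ z ∈ D, ∀ s : ℝ, G s z ∈ D := by
    intro z hz s
    have h1 : HasDerivAt (fun τ : ℝ => G (τ + s) z) ((1 : ℝ) • G s (A₀ z)) 0 :=
      HasDerivAt.scomp_of_eq 0 (hGderiv z hz s) ((hasDerivAt_id 0).add_const s) (by simp)
    have heq : (fun τ : ℝ => G (τ + s) z) = fun τ => G τ (G s z) := by
      funext τ; rw [hGadd τ s]; rfl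
    rw [heq, one_smul] at h1
    rw [hD]
    exact ⟨_, h1⟩
  -- product rule: differentiating σ ↦ G (-σ) (x σ)
  have hprod : ∀ (x : ℝ → X) (x' : X) (τ : ℝ), HasDerivWithinAt x x' (Icc 0 T) τ → x τ ∈ D →
      HasDerivWithinAt (fun σ => G (-σ) (x σ))
        (G (-τ) x' + -(G (-τ) (A₀ (x τ)))) (Icc 0 T) τ := by
    intro x x' τ hx hxD
    have h2 : HasDerivWithinAt (fun σ : ℝ => G (-σ) (x τ))
        (-(G (-τ) (A₀ (x τ)))) (Icc 0 T) τ := by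
      have hgd : HasDerivAt (fun σ : ℝ => G (-σ) (x τ)) ((-1 : ℝ) • G (-τ) (A₀ (x τ))) τ :=
        HasDerivAt.scomp_of_eq τ (hGderiv _ hxD (-τ)) (hasDerivAt_neg τ) rfl
      simpa using hgd.hasDerivWithinAt
    have h1 : HasDerivWithinAt (fun σ => G (-σ) (x σ - x τ)) (G (-τ) x') (Icc 0 T) τ := by
      rw [hasDerivWithinAt_iff_tendsto_slope]
      have hslope : Tendsto (slope x τ) (𝓝[Icc 0 T \ {τ}] τ) (𝓝 x') :=
        hasDerivWithinAt_iff_tendsto_slope.mp hx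
      have hpair : Tendsto (fun σ : ℝ => ((-σ : ℝ), slope x τ σ))
          (𝓝[Icc 0 T \ {τ}] τ) (𝓝 (-τ, x')) :=
        Tendsto.prodMk_nhds ((continuous_neg.tendsto τ).mono_left nhdsWithin_le_nhds) hslope
      have hcomp := (hjc.tendsto (-τ, x')).comp hpair
      refine hcomp.congr' ?_
      refine Filter.Eventually.of_forall fun σ => ?_
      show G (-σ) (slope x τ σ) = slope (fun σ => G (-σ) (x σ - x τ)) τ σ
      simp only [slope, vsub_eq_sub, sub_self, map_zero, sub_zero, map_smul]
    have h3 := h1.add h2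
    have heq : ∀ σ, G (-σ) (x σ - x τ) + G (-σ) (x τ) = G (-σ) (x σ) := by
      intro σ; rw [← map_add]; congr 1; abel
    exact h3.congr (fun σ _ => (heq σ).symm) (heq τ).symm
  -- group inverse identities
  have hGG : ∀ (τ : ℝ) (w : X), G (-τ) (G τ w) = w := by
    intro τ w
    have h := hGadd (-τ) τ
    rw [neg_add_cancel, hG0] at h
    calc G (-τ) (G τ w) = ((G (-τ)).comp (G τ)) w := rfl
      _ = (1 : X →L[ℝ] X) w := by rw [← h]
      _ = w := rfl
  have hGG' : ∀ (τ : ℝ) (w : X), G τ (G (-τ) w) = w := by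
    intro τ w; have h := hGG (-τ) w; rwa [neg_neg] at h
  -- the key identity on D
  have key : ∀ y ∈ D, ∀ t ∈ Icc 0 T, U t 0 y = G t (NormedSpace.exp (t • B) y) := by
    intro y hy t ht
    set v : ℝ → X := fun σ => G (-σ) (U σ 0 y) with hv
    have hvderiv : ∀ τ ∈ Icc 0 T, HasDerivWithinAt v (B (v τ)) (Icc 0 T) τ := by
      intro τ hτ
      have hU := hsol 0 h0T y hy τ hτ
      have hUD : U τ 0 y ∈ D := hinv 0 h0T τ hτ y hy
      have h := hprod (fun σ => U σ 0 y) _ τ hU hUD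
      have heq : G (-τ) (A₀ (U τ 0 y) + G τ (B (G (-τ) (U τ 0 y))))
          + -(G (-τ) (A₀ (U τ 0 y))) = B (v τ) := by
        rw [map_add, hGG]
        simp [hv]
      rwa [heq] at h
    set h : ℝ → X := fun σ => NormedSpace.exp (σ • (-B)) (v σ) with hh
    have hhderiv : ∀ τ ∈ Icc 0 T, HasDerivWithinAt h 0 (Icc 0 T) τ := by
      intro τ hτ
      have hexp : HasDerivAt (fun σ : ℝ => NormedSpace.exp (σ • (-B)))
          (NormedSpace.exp (τ • (-B)) * (-B)) τ := hasDerivAt_exp_smul_const (-B) τ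
      have hd := hexp.hasDerivWithinAt.clm_apply (hvderiv τ hτ)
      have heq : (NormedSpace.exp (τ • (-B)) * (-B)) (v τ)
          + NormedSpace.exp (τ • (-B)) (B (v τ)) = 0 := by
        rw [ContinuousLinearMap.mul_apply]
        simp
      rwa [heq] at hd
    have hconst : h t = h 0 := by
      have hle := (convex_Icc (0 : ℝ) T).norm_image_sub_le_of_norm_hasDerivWithin_le
        (f' := fun _ => (0 : X)) (C := 0) hhderiv (fun τ _ => by simp) h0T ht
      have : ‖h t - h 0‖ ≤ 0 := by simpa using hle
      have := le_antisymm this (norm_nonneg _)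
      rw [norm_eq_zero, sub_eq_zero] at this
      exact this
    have hh0 : h 0 = y := by
      have hU00 : U 0 0 y = y := by rw [hid 0 h0T]; rfl
      simp [hh, hv, NormedSpace.exp_zero, hU00, neg_zero, hG0]
    have hmul : NormedSpace.exp (t • B) * NormedSpace.exp (t • (-B)) = 1 := by
      let +nondep : NormedAlgebra ℚ (X →L[ℝ] X) := .restrictScalars ℚ ℝ (X →L[ℝ] X)
      rw [← NormedSpace.exp_add_of_commute]
      · rw [show t • B + t • (-B) = 0 by simp]
        exact NormedSpace.exp_zero
      · rw [smul_neg]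
        exact (Commute.refl (t • B)).neg_right
    have hvt : v t = NormedSpace.exp (t • B) y := by
      have h1 : NormedSpace.exp (t • B) (NormedSpace.exp (t • (-B)) (v t)) = v t := by
        rw [← ContinuousLinearMap.mul_apply, hmul, ContinuousLinearMap.one_apply]
      have h2 : NormedSpace.exp (t • (-B)) (v t) = y := by
        rw [← hh0, ← hconst]
      rw [← h1, h2]
    have : G t (v t) = U t 0 y := hGG' t _
    rw [hvt] at this
    exact this.symm
  -- density of D
  have hdense : Dense D := by
    intro x
    rw [Metric.mem_closure_iff]
    intro ε hε
    have hc : ContinuousAt (fun s : ℝ => G s x) 0 := (hGsc x).continuousAt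
    obtain ⟨δ, hδ, hδ'⟩ := Metric.continuousAt_iff.mp hc (ε / 2) (by positivity)
    set e : ℝ := δ / 2 with he
    have he0 : 0 < e := by positivity
    set F : ℝ → X := fun u => ∫ s in (0 : ℝ)..u, G s x with hF
    set xe : X := e⁻¹ • F e with hxe
    have hint : ∀ a b : ℝ, IntervalIntegrable (fun s : ℝ => G s x) MeasureTheory.volume a b :=
      fun a b => (hGsc x).intervalIntegrable a b
    refine ⟨xe, ?_, ?_⟩
    · -- xe ∈ D
      have happ : ∀ τ : ℝ, G τ xe = e⁻¹ • (F (τ + e) - F τ) := by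
        intro τ
        have h1 : G τ xe = e⁻¹ • ∫ s in (0 : ℝ)..e, G τ (G s x) := by
          rw [hxe, map_smul, (G τ).intervalIntegral_comp_comm (hint 0 e)]
        have h2 : (fun s : ℝ => G τ (G s x)) = fun s : ℝ => G (τ + s) x := by
          funext s; rw [hGadd τ s]; rfl
        have h3 : (∫ s in (0 : ℝ)..e, G (τ + s) x) = ∫ s in τ..(τ + e), G s x := by
          have := intervalIntegral.integral_comp_add_left (a := (0 : ℝ)) (b := e)
            (fun s : ℝ => G s x) τ
          simpa using this
        have h4 : (∫ s in τ..(τ + e), G s x) = F (τ + e) - F τ := by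
          rw [eq_sub_iff_add_eq, add_comm]
          exact intervalIntegral.integral_add_adjacent_intervals (hint 0 τ) (hint τ (τ + e))
        rw [h1, h2, h3, h4]
      have hF1 : HasDerivAt (fun τ : ℝ => F (τ + e)) (G e x) 0 := by
        have hFd : HasDerivAt F (G (0 + e) x) (0 + e) :=
          ((hGsc x).integral_hasStrictDerivAt 0 (0 + e)).hasDerivAt
        have := HasDerivAt.scomp_of_eq 0 hFd ((hasDerivAt_id 0).add_const e) rfl
        simpa [Function.comp_def] using this
      have hF2 : HasDerivAt F x 0 := by
        have hFd : HasDerivAt F (G 0 x) 0 :=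
          ((hGsc x).integral_hasStrictDerivAt 0 0).hasDerivAt
        rwa [hG0, ContinuousLinearMap.one_apply] at hFd
      have hd : HasDerivAt (fun τ : ℝ => e⁻¹ • (F (τ + e) - F τ)) (e⁻¹ • (G e x - x)) 0 :=
        (hF1.sub hF2).const_smul e⁻¹
      have heqf : (fun τ : ℝ => G τ xe) = fun τ : ℝ => e⁻¹ • (F (τ + e) - F τ) :=
        funext happ
      rw [hD]
      exact ⟨_, heqf ▸ hd⟩
    · -- dist x xe < ε
      have hdiff : xe - x = e⁻¹ • ∫ s in (0 : ℝ)..e, (G s x - x) := by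
        rw [intervalIntegral.integral_sub (hint 0 e) (intervalIntegrable_const),
          intervalIntegral.integral_const, smul_sub, hxe, hF, sub_zero, smul_smul,
          inv_mul_cancel₀ (ne_of_gt he0), one_smul]
      have hbnd : ‖∫ s in (0 : ℝ)..e, (G s x - x)‖ ≤ (ε / 2) * |e - 0| := by
        refine intervalIntegral.norm_integral_le_of_norm_le_const fun s hs => ?_
        rw [uIoc_of_le he0.le] at hs
        have hds : dist s 0 < δ := by
          rw [Real.dist_eq, sub_zero, abs_of_pos hs.1]
          calc s ≤ e := hs.2
            _ < δ := by rw [he]; linarith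
        have := hδ' hds
        rw [hG0, ContinuousLinearMap.one_apply] at this
        rw [dist_eq_norm] at this
        exact this.le
      have hxex : ‖xe - x‖ ≤ ε / 2 := by
        rw [hdiff, norm_smul, norm_inv, Real.norm_eq_abs, abs_of_pos he0]
        calc e⁻¹ * ‖∫ s in (0 : ℝ)..e, (G s x - x)‖ ≤ e⁻¹ * ((ε / 2) * |e - 0|) := by
              exact mul_le_mul_of_nonneg_left hbnd (by positivity)
          _ = ε / 2 := by
              rw [sub_zero, abs_of_pos he0]; field_simp
      calc dist x xe = ‖xe - x‖ := by rw [dist_comm, dist_eq_norm]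
        _ ≤ ε / 2 := hxex
        _ < ε := by linarith
  constructor
  · intro t ht
    have hfun : (fun y => U t 0 y) = fun y => ((G t).comp (NormedSpace.exp (t • B))) y := by
      refine Continuous.ext_on hdense (U t 0).continuous
        ((G t).comp (NormedSpace.exp (t • B))).continuous ?_
      intro y hy
      exact key y hy t ht
    exact ContinuousLinearMap.ext fun y => congrFun hfun y
  · intro t ht y hy
    have h1 : U t 0 y ∈ D := hinv 0 h0T t ht y hy
    have h2 : U t 0 y = G t (NormedSpace.exp (t • B) y) := key y hy t ht
    have h3 : NormedSpace.exp (t • B) y = G (-t) (U t 0 y) := by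
      rw [h2, hGG t]
    rw [h3]
    exact hDinv _ h1 (-t)
end

section
/- The Weierstrass function g(ξ) = Σ_{n=1}^∞ 2^{-n} cos(2^n ξ) is nowhere differentiable on ℝ. -/
open Real Filter Asymptotics

/-- The higher-order kernel. -/
noncomputable def Kker (θ : ℝ) : ℝ := 8 * (Real.cos θ - 1)^3 * (Real.cos θ + 3)

lemma Kker_eq (θ : ℝ) :
    64*(Real.cos θ - 1) - 20*(Real.cos (2*θ) - 1) + (Real.cos (4*θ) - 1) = Kker θ := by
  have h2 : Real.cos (2*θ) = 2 * Real.cos θ ^ 2 - 1 := Real.cos_two_mul θ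
  have h4 : Real.cos (4*θ) = 2 * Real.cos (2*θ) ^ 2 - 1 := by
    have := Real.cos_two_mul (2*θ)
    rw [show (2:ℝ)*(2*θ) = 4*θ by ring] at this
    exact this
  rw [Kker, h4, h2]; ring

lemma Kker_nonpos (θ : ℝ) : Kker θ ≤ 0 := by
  have h1 : Real.cos θ ≤ 1 := Real.cos_le_one θ
  have h2 : -1 ≤ Real.cos θ := Real.neg_one_le_cos θ
  have h3 : (Real.cos θ - 1)^3 ≤ 0 := by nlinarith [sq_nonneg (Real.cos θ - 1)]
  rw [Kker]
  nlinarith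

lemma Kker_bound (θ : ℝ) : |Kker θ| ≤ 4 * θ^6 := by
  have h1 : Real.cos θ ≤ 1 := Real.cos_le_one θ
  have h2 : -1 ≤ Real.cos θ := Real.neg_one_le_cos θ
  have hq : 1 - θ^2/2 ≤ Real.cos θ := Real.one_sub_sq_div_two_le_cos
  rw [abs_of_nonpos (Kker_nonpos θ), Kker]
  have h0 : (0:ℝ) ≤ 1 - Real.cos θ := by linarith
  have h5 : (1 - Real.cos θ)^3 ≤ (θ^2/2)^3 := by
    apply pow_le_pow_left₀ h0 (by linarith) 3
  nlinarith [sq_nonneg θ, pow_nonneg h0 3, pow_nonneg (sq_nonneg θ) 3]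

lemma Kker_pi : Kker π = -128 := by rw [Kker, Real.cos_pi]; norm_num

lemma Kker_pi_div_two : Kker (π/2) = -24 := by rw [Kker, Real.cos_pi_div_two]; norm_num

lemma Kker_even (j : ℕ) : Kker ((2:ℝ)^(j+1) * π) = 0 := by
  have h : (2:ℝ)^(j+1) * π = (2^j : ℕ) * (2 * π) := by push_cast; ring
  rw [Kker, h, Real.cos_nat_mul_two_pi]; ring

lemma summable_aux (f : ℕ → ℝ) (C : ℝ) (h : ∀ n, |f n| ≤ C) :
    Summable (fun n => f n / 2^(n+1)) := by
  have hC : 0 ≤ C := le_trans (abs_nonneg _) (h 0)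
  apply Summable.of_norm_bounded (g := fun n => (C/2) * (1/2)^n)
    (summable_geometric_two.mul_left _)
  intro n
  rw [Real.norm_eq_abs, abs_div, abs_of_pos (by positivity : (0:ℝ) < 2^(n+1))]
  rw [div_le_iff₀ (by positivity)]
  have : (C/2) * (1/2)^n * 2^(n+1) = C := by
    rw [pow_succ]
    field_simp
    rw [mul_assoc, ← mul_pow]; norm_num
  rw [this]
  exact h n

lemma summable_cos (y : ℝ) :
    Summable (fun n : ℕ => Real.cos ((2:ℝ)^(n+1)*y) / 2^(n+1)) :=
  summable_aux _ 1 (fun n => Real.abs_cos_le_one _)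

lemma summable_term (x h : ℝ) :
    Summable (fun n : ℕ => 2 * Real.cos ((2:ℝ)^(n+1)*x) * (Real.cos ((2:ℝ)^(n+1)*h) - 1) / 2^(n+1)) := by
  apply summable_aux _ 4
  intro n
  have h1 := Real.abs_cos_le_one ((2:ℝ)^(n+1)*x)
  have h2 := Real.abs_cos_le_one ((2:ℝ)^(n+1)*h)
  rw [abs_mul, abs_mul, abs_two]
  calc 2 * |Real.cos ((2:ℝ)^(n+1)*x)| * |Real.cos ((2:ℝ)^(n+1)*h) - 1|
      ≤ 2 * 1 * |Real.cos ((2:ℝ)^(n+1)*h) - 1| := by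
        gcongr
    _ ≤ 2 * 1 * 2 := by
        gcongr
        rw [abs_sub_le_iff]
        constructor <;> [skip; skip] <;> cases' abs_le.mp h2 with hl hr <;> linarith
    _ = 4 := by norm_num

lemma F_rep (x h : ℝ) :
    (∑' n : ℕ, Real.cos ((2:ℝ)^(n+1)*(x+h)) / 2^(n+1))
      + (∑' n : ℕ, Real.cos ((2:ℝ)^(n+1)*(x-h)) / 2^(n+1))
      - 2 * (∑' n : ℕ, Real.cos ((2:ℝ)^(n+1)*x) / 2^(n+1))
    = ∑' n : ℕ, 2 * Real.cos ((2:ℝ)^(n+1)*x) * (Real.cos ((2:ℝ)^(n+1)*h) - 1) / 2^(n+1) := by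
  rw [← tsum_mul_left (a := (2:ℝ)), ← Summable.tsum_add (summable_cos (x+h)) (summable_cos (x-h)),
    ← Summable.tsum_sub (((summable_cos (x+h)).add (summable_cos (x-h)))) ((summable_cos x).mul_left 2)]
  apply tsum_congr
  intro n
  rw [mul_add, mul_sub, Real.cos_add, Real.cos_sub]
  ring

lemma H_rep (x h : ℝ) :
    64 * (∑' n : ℕ, 2 * Real.cos ((2:ℝ)^(n+1)*x) * (Real.cos ((2:ℝ)^(n+1)*h) - 1) / 2^(n+1))
    - 20 * (∑' n : ℕ, 2 * Real.cos ((2:ℝ)^(n+1)*x) * (Real.cos ((2:ℝ)^(n+1)*(2*h)) - 1) / 2^(n+1))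
    + (∑' n : ℕ, 2 * Real.cos ((2:ℝ)^(n+1)*x) * (Real.cos ((2:ℝ)^(n+1)*(4*h)) - 1) / 2^(n+1))
    = ∑' n : ℕ, 2 * Real.cos ((2:ℝ)^(n+1)*x) * Kker ((2:ℝ)^(n+1)*h) / 2^(n+1) := by
  rw [← tsum_mul_left (a := (64:ℝ)), ← tsum_mul_left (a := (20:ℝ)),
    ← Summable.tsum_sub ((summable_term x h).mul_left 64) ((summable_term x (2*h)).mul_left 20),
    ← Summable.tsum_add (((summable_term x h).mul_left 64).sub ((summable_term x (2*h)).mul_left 20))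
      (summable_term x (4*h))]
  apply tsum_congr
  intro n
  rw [show (2:ℝ)^(n+1)*(2*h) = 2*((2:ℝ)^(n+1)*h) by ring,
    show (2:ℝ)^(n+1)*(4*h) = 4*((2:ℝ)^(n+1)*h) by ring, ← Kker_eq]
  ring

lemma geom_tail (M : ℕ) :
    ∑ n ∈ Finset.range (M+1), ((1/32:ℝ))^(M+2-n) ≤ 1/992 := by
  have hrefl := Finset.sum_range_reflect (fun j => ((1/32:ℝ))^(M+2-j)) (M+1)
  have h1 : ∑ n ∈ Finset.range (M+1), ((1/32:ℝ))^(M+2-n)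
      = ∑ j ∈ Finset.range (M+1), ((1/32:ℝ))^(j+2) := by
    rw [← hrefl]
    apply Finset.sum_congr rfl
    intro j hj
    have hj' : j < M + 1 := Finset.mem_range.mp hj
    congr 1
    omega
  rw [h1]
  have h2 : ∀ j, ((1/32:ℝ))^(j+2) = (1/1024) * (1/32)^j := by
    intro j
    rw [pow_add]
    norm_num
    ring
  rw [Finset.sum_congr rfl (fun j _ => h2 j), ← Finset.mul_sum]
  have h3 : ∑ j ∈ Finset.range (M+1), ((1/32:ℝ))^j ≤ (1 - 1/32)⁻¹ := by
    rw [← tsum_geometric_of_lt_one (by norm_num) (by norm_num)]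
    exact Summable.sum_le_tsum _ (fun i _ => by positivity)
      (summable_geometric_of_lt_one (by norm_num) (by norm_num))
  calc (1/1024:ℝ) * ∑ j ∈ Finset.range (M+1), ((1/32:ℝ))^j
      ≤ (1/1024) * (1 - 1/32)⁻¹ := by gcongr
    _ ≤ 1/992 := by norm_num

lemma pow_arith (e k : ℕ) : 2 * (4 * (π/2^e)^6) / 2^k = (8*π^6/(2^k*2^e)) * ((1/32:ℝ))^e := by
  have h1 : ((1/32:ℝ))^e = 1/((2:ℝ)^5)^e := by
    rw [show ((2:ℝ)^5) = 32 by norm_num, one_div, inv_pow, one_div]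
  have h2 : ((2:ℝ)^5)^e = 2^(5*e) := by rw [← pow_mul]
  have h3 : ((2:ℝ)^e)^6 = 2^(e*6) := by rw [← pow_mul]
  have h4 : (2:ℝ)^(e*6) = 2^(5*e) * 2^e := by rw [← pow_add]; congr 1; omega
  rw [div_pow, h3, h4, h1, h2]
  have e1 : ((2:ℝ))^(5*e) ≠ 0 := by positivity
  have e2 : ((2:ℝ))^e ≠ 0 := by positivity
  have e3 : ((2:ℝ))^k ≠ 0 := by positivity
  field_simp
  ring

lemma tsum_eval (x : ℝ) (M : ℕ) :
    ∃ R : ℝ, |R| ≤ 104 / 2^(M+3) ∧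
      (∑' n : ℕ, 2 * Real.cos ((2:ℝ)^(n+1)*x) * Kker ((2:ℝ)^(n+1)*(π/2^(M+3))) / 2^(n+1))
      = -256 * Real.cos ((2:ℝ)^(M+3)*x) / 2^(M+3) + R := by
  have hvanish : ∀ n ∉ Finset.range (M+3),
      2 * Real.cos ((2:ℝ)^(n+1)*x) * Kker ((2:ℝ)^(n+1)*(π/2^(M+3))) / 2^(n+1) = 0 := by
    intro n hn
    rw [Finset.mem_range, not_lt] at hn
    have hp : (2:ℝ)^(n+1) = 2^((n-(M+3))+1) * 2^(M+3) := by
      rw [← pow_add]; congr 1; omega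
    have hθ : (2:ℝ)^(n+1) * (π/2^(M+3)) = (2:ℝ)^((n-(M+3))+1) * π := by
      rw [hp]; field_simp
    rw [hθ, Kker_even]
    ring
  have hsum := tsum_eq_sum (L := SummationFilter.unconditional ℕ) hvanish
  rw [hsum, Finset.sum_range_succ, Finset.sum_range_succ]
  -- top term
  have hπ : (2:ℝ)^(M+2+1) * (π/2^(M+3)) = π := by
    have : M+2+1 = M+3 := rfl
    rw [this]; field_simp
  have hπ2 : (2:ℝ)^(M+1+1) * (π/2^(M+3)) = π/2 := by
    have h2 : (2:ℝ)^(M+3) = 2^(M+1+1) * 2 := by rw [← pow_succ]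
    rw [h2]; field_simp
  rw [hπ, Kker_pi, hπ2, Kker_pi_div_two]
  refine ⟨(∑ n ∈ Finset.range (M+1),
      2 * Real.cos ((2:ℝ)^(n+1)*x) * Kker ((2:ℝ)^(n+1)*(π/2^(M+3))) / 2^(n+1))
      + 2 * Real.cos ((2:ℝ)^(M+1+1)*x) * (-24) / 2^(M+1+1), ?_, ?_⟩
  · -- bound on R
    have hmid : |2 * Real.cos ((2:ℝ)^(M+1+1)*x) * (-24) / 2^(M+1+1)| ≤ 96 / 2^(M+3) := by
      rw [abs_div, abs_of_pos (show (0:ℝ) < 2^(M+1+1) by positivity)]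
      have hc := Real.abs_cos_le_one ((2:ℝ)^(M+1+1)*x)
      have habs : |2 * Real.cos ((2:ℝ)^(M+1+1)*x) * (-24)| ≤ 48 := by
        rw [abs_mul, abs_mul, abs_two, abs_neg]
        have h24 : |(24:ℝ)| = 24 := by norm_num
        rw [h24]
        nlinarith [abs_nonneg (Real.cos ((2:ℝ)^(M+1+1)*x))]
      have h2 : (2:ℝ)^(M+3) = 2 * 2^(M+1+1) := by rw [pow_succ]; ring
      rw [div_le_div_iff₀ (by positivity) (by positivity), h2]
      nlinarith [pow_pos (show (0:ℝ) < 2 by norm_num) (M+1+1)]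
    have htail : |∑ n ∈ Finset.range (M+1),
        2 * Real.cos ((2:ℝ)^(n+1)*x) * Kker ((2:ℝ)^(n+1)*(π/2^(M+3))) / 2^(n+1)|
        ≤ 8 / 2^(M+3) := by
      calc |∑ n ∈ Finset.range (M+1),
          2 * Real.cos ((2:ℝ)^(n+1)*x) * Kker ((2:ℝ)^(n+1)*(π/2^(M+3))) / 2^(n+1)|
          ≤ ∑ n ∈ Finset.range (M+1),
            |2 * Real.cos ((2:ℝ)^(n+1)*x) * Kker ((2:ℝ)^(n+1)*(π/2^(M+3))) / 2^(n+1)| :=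
          Finset.abs_sum_le_sum_abs _ _
        _ ≤ ∑ n ∈ Finset.range (M+1), (8*π^6/2^(M+3)) * ((1/32:ℝ))^(M+2-n) := by
            apply Finset.sum_le_sum
            intro n hn
            have hn' : n < M+1 := Finset.mem_range.mp hn
            have hsplit : (2:ℝ)^(M+3) = 2^(n+1) * 2^(M+2-n) := by
              rw [← pow_add]; congr 1; omega
            have hθ : (2:ℝ)^(n+1) * (π/2^(M+3)) = π/2^(M+2-n) := by
              rw [hsplit]; field_simp
            rw [hθ, abs_div, abs_of_pos (show (0:ℝ) < 2^(n+1) by positivity), abs_mul]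
            have hK := Kker_bound (π/2^(M+2-n))
            have hc := Real.abs_cos_le_one ((2:ℝ)^(n+1)*x)
            have habs2 : |2 * Real.cos ((2:ℝ)^(n+1)*x)| ≤ 2 := by
              rw [abs_mul, abs_two]
              nlinarith [abs_nonneg (Real.cos ((2:ℝ)^(n+1)*x))]
            have step1 : |2 * Real.cos ((2:ℝ)^(n+1)*x)| * |Kker (π/2^(M+2-n))|
                ≤ 2 * (4 * (π/2^(M+2-n))^6) := by
              calc |2 * Real.cos ((2:ℝ)^(n+1)*x)| * |Kker (π/2^(M+2-n))|
                  ≤ 2 * |Kker (π/2^(M+2-n))| := by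
                    apply mul_le_mul_of_nonneg_right habs2 (abs_nonneg _)
                _ ≤ 2 * (4 * (π/2^(M+2-n))^6) := by linarith
            have hEq : 2 * (4 * (π/2^(M+2-n))^6) / 2^(n+1)
                = (8*π^6/2^(M+3)) * ((1/32:ℝ))^(M+2-n) := by
              rw [hsplit]; exact pow_arith (M+2-n) (n+1)
            rw [← hEq]
            exact (div_le_div_iff_of_pos_right (by positivity)).mpr step1
        _ = (8*π^6/2^(M+3)) * ∑ n ∈ Finset.range (M+1), ((1/32:ℝ))^(M+2-n) :=
            (Finset.mul_sum _ _ _).symm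
        _ ≤ (8*π^6/2^(M+3)) * (1/992) := by
            have : (0:ℝ) ≤ 8*π^6/2^(M+3) := by positivity
            exact mul_le_mul_of_nonneg_left (geom_tail M) this
        _ ≤ 8 / 2^(M+3) := by
            have hπ6 : π^6 ≤ 3.15^6 := by
              apply pow_le_pow_left₀ pi_pos.le pi_lt_d2.le
            have h315 : (3.15:ℝ)^6 ≤ 980 := by norm_num
            rw [div_mul_eq_mul_div, div_le_div_iff₀ (by positivity) (by positivity)]
            nlinarith [pow_pos (show (0:ℝ) < 2 by norm_num) (M+3)]
    refine le_trans (abs_add_le _ _) ?_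
    refine le_of_le_of_eq (add_le_add htail hmid) (by ring)
  · -- the equation
    have : M+2+1 = M+3 := rfl
    rw [this]
    ring

/-- The Weierstrass function `g ξ = Σ_{n=1}^∞ 2⁻ⁿ cos (2ⁿ ξ)` is nowhere differentiable. -/
theorem weierstrass_function_nowhere_differentiable
    (g : ℝ → ℝ)
    (hg : g = fun ξ => ∑' n : ℕ, Real.cos ((2:ℝ) ^ (n + 1) * ξ) / (2:ℝ) ^ (n + 1)) :
    ∀ ξ : ℝ, ¬ DifferentiableAt ℝ g ξ := by
  intro x hd
  have hgx : ∀ y : ℝ, g y = ∑' n : ℕ, Real.cos ((2:ℝ)^(n+1)*y) / 2^(n+1) := by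
    intro y; rw [hg]
  have hF : ∀ h : ℝ, g (x+h) + g (x-h) - 2 * g x
      = ∑' n : ℕ, 2 * Real.cos ((2:ℝ)^(n+1)*x) * (Real.cos ((2:ℝ)^(n+1)*h) - 1) / 2^(n+1) := by
    intro h; rw [hgx, hgx, hgx]; exact F_rep x h
  -- little-o facts
  have hder : HasDerivAt g (deriv g x) x := hd.hasDerivAt
  have h1 : (fun h : ℝ => g (x+h) - g x - h * deriv g x) =o[nhds 0] (fun h : ℝ => h) := by
    have := hasDerivAt_iff_isLittleO_nhds_zero.mp hder
    simpa [smul_eq_mul] using this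
  have hneg : HasDerivAt (fun h : ℝ => g (x - h)) (-deriv g x) 0 := by
    have hi : HasDerivAt (fun h : ℝ => x - h) (-1 : ℝ) 0 := by
      simpa using (hasDerivAt_id (0:ℝ)).const_sub x
    have hc : HasDerivAt g (deriv g x) ((fun h : ℝ => x - h) 0) := by simpa using hder
    have := hc.comp 0 hi
    simpa [Function.comp_def] using this
  have h2 : (fun h : ℝ => g (x-h) - g x + h * deriv g x) =o[nhds 0] (fun h : ℝ => h) := by
    have := hasDerivAt_iff_isLittleO_nhds_zero.mp hneg
    simp only [zero_add, sub_zero, smul_eq_mul, mul_neg] at this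
    simpa [sub_neg_eq_add] using this
  have hFo : (fun h : ℝ => g (x+h) + g (x-h) - 2 * g x) =o[nhds 0] (fun h : ℝ => h) := by
    have h3 := h1.add h2
    apply h3.congr' ?_ (Filter.EventuallyEq.refl _ _)
    apply Filter.Eventually.of_forall
    intro h
    ring
  have hO2 : (fun h : ℝ => 2*h) =O[nhds 0] (fun h : ℝ => h) := isBigO_const_mul_self 2 _ _
  have hO4 : (fun h : ℝ => 4*h) =O[nhds 0] (fun h : ℝ => h) := isBigO_const_mul_self 4 _ _
  have hten2 : Filter.Tendsto (fun h : ℝ => 2*h) (nhds 0) (nhds 0) := by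
    simpa using (continuous_mul_left (2:ℝ)).tendsto (0:ℝ)
  have hten4 : Filter.Tendsto (fun h : ℝ => 4*h) (nhds 0) (nhds 0) := by
    simpa using (continuous_mul_left (4:ℝ)).tendsto (0:ℝ)
  have hF2 : (fun h : ℝ => g (x+2*h) + g (x-2*h) - 2 * g x) =o[nhds 0] (fun h : ℝ => h) := by
    have := (hFo.comp_tendsto hten2).trans_isBigO hO2
    simpa [Function.comp_def] using this
  have hF4 : (fun h : ℝ => g (x+4*h) + g (x-4*h) - 2 * g x) =o[nhds 0] (fun h : ℝ => h) := by
    have := (hFo.comp_tendsto hten4).trans_isBigO hO4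
    simpa [Function.comp_def] using this
  have hHo : (fun h : ℝ => 64 * (g (x+h) + g (x-h) - 2*g x)
      - 20 * (g (x+2*h) + g (x-2*h) - 2*g x)
      + (g (x+4*h) + g (x-4*h) - 2*g x)) =o[nhds 0] (fun h : ℝ => h) :=
    ((hFo.const_mul_left 64).sub (hF2.const_mul_left 20)).add hF4
  have hev := hHo.def one_pos
  rw [Metric.eventually_nhds_iff] at hev
  obtain ⟨δ, hδ, hball⟩ := hev
  -- choose a good scale
  obtain ⟨k, hk⟩ := pow_unbounded_of_one_lt (4/δ) (one_lt_two (α := ℝ))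
  -- choose a good frequency m = M+3 ≥ k+3 with |cos (2^m x)| ≥ 0.45
  have hgood : ∃ m : ℕ, k + 3 ≤ m ∧ (0.45:ℝ) ≤ |Real.cos ((2:ℝ)^m * x)| := by
    by_cases hc : (0.45:ℝ) ≤ |Real.cos ((2:ℝ)^(k+3) * x)|
    · exact ⟨k+3, le_refl _, hc⟩
    · refine ⟨k+4, by omega, ?_⟩
      push_neg at hc
      have hdouble : Real.cos ((2:ℝ)^(k+4) * x) = 2 * Real.cos ((2:ℝ)^(k+3) * x)^2 - 1 := by
        rw [show (2:ℝ)^(k+4) * x = 2*((2:ℝ)^(k+3) * x) by ring]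
        exact Real.cos_two_mul _
      have hcsq : Real.cos ((2:ℝ)^(k+3) * x)^2 < 0.2025 := by
        nlinarith [sq_abs (Real.cos ((2:ℝ)^(k+3) * x)), abs_nonneg (Real.cos ((2:ℝ)^(k+3) * x))]
      rw [hdouble, abs_of_nonpos (by nlinarith)]
      nlinarith
  obtain ⟨m, hkm, hcos⟩ := hgood
  obtain ⟨M, rfl⟩ : ∃ M : ℕ, m = M + 3 := ⟨m - 3, by omega⟩
  set t : ℝ := 2^(M+3) with htdef
  have ht : (0:ℝ) < t := by positivity
  -- our test increment
  set y : ℝ := π / t with hydef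
  have hy : 0 < y := by positivity
  have hyδ : dist y 0 < δ := by
    rw [Real.dist_eq, sub_zero, abs_of_pos hy]
    have h2k : (2:ℝ)^k ≤ t := by
      rw [htdef]
      apply pow_le_pow_right₀ (by norm_num) (by omega)
    have hπ4 : π < 4 := pi_lt_four
    have hδ4 : 4/δ < 2^k := hk
    rw [hydef, div_lt_iff₀ ht]
    calc π < 4 := hπ4
      _ = (4/δ) * δ := by field_simp
      _ ≤ 2^k * δ := by gcongr
      _ ≤ t * δ := by gcongr
      _ = δ * t := by ring
  have hbound := hball hyδ
  simp only [Real.norm_eq_abs, one_mul] at hbound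
  -- compute the value
  obtain ⟨R, hR, hRval⟩ := tsum_eval x M
  have hHval : 64 * (g (x+y) + g (x-y) - 2*g x)
      - 20 * (g (x+2*y) + g (x-2*y) - 2*g x)
      + (g (x+4*y) + g (x-4*y) - 2*g x)
      = -256 * Real.cos ((2:ℝ)^(M+3)*x) / 2^(M+3) + R := by
    rw [hF y, hF (2*y), hF (4*y), H_rep x y, ← hRval]
  rw [hHval] at hbound
  -- the contradiction
  have habsy : |y| = π / t := abs_of_pos hy
  rw [habsy] at hbound
  have hlow : 256 * |Real.cos ((2:ℝ)^(M+3)*x)| / t - |R|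
      ≤ |(-256) * Real.cos ((2:ℝ)^(M+3)*x) / 2^(M+3) + R| := by
    have h5 : |(-256) * Real.cos ((2:ℝ)^(M+3)*x) / 2^(M+3)|
        = 256 * |Real.cos ((2:ℝ)^(M+3)*x)| / t := by
      rw [abs_div, abs_mul]
      norm_num [htdef, abs_of_pos (show (0:ℝ) < (2:ℝ)^(M+3) by positivity)]
    calc 256 * |Real.cos ((2:ℝ)^(M+3)*x)| / t - |R|
        = |(-256) * Real.cos ((2:ℝ)^(M+3)*x) / 2^(M+3)| - |R| := by rw [h5]
      _ ≤ _ := by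
          have := abs_add_le ((-256) * Real.cos ((2:ℝ)^(M+3)*x) / 2^(M+3) + R) (-R)
          simp only [add_neg_cancel_right, abs_neg] at this
          linarith
  have hnum1 : 256 * (0.45:ℝ) / t ≤ 256 * |Real.cos ((2:ℝ)^(M+3)*x)| / t := by gcongr
  have hRt : |R| ≤ 104 / t := hR
  have hfinal : (11.2:ℝ) / t ≤ 3.15 / t := by
    have e1 : (11.2:ℝ)/t = 256 * 0.45/t - 104/t := by ring
    calc (11.2:ℝ)/t = 256 * 0.45/t - 104/t := e1
      _ ≤ 256 * |Real.cos ((2:ℝ)^(M+3)*x)| / t - |R| := by linarith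
      _ ≤ |(-256) * Real.cos ((2:ℝ)^(M+3)*x) / 2^(M+3) + R| := hlow
      _ ≤ π / t := hbound
      _ ≤ 3.15 / t := by
          gcongr
          exact pi_lt_d2.le
  have := (div_le_div_iff_of_pos_right ht).mp hfinal
  norm_num at this
end
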